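/- arXiv:1505.02117 — 6 statements merged into one kernel-verified Lean document; each statement's English description precedes it below -/
import Mathlib

section
/- For all x with 0 < x < 1, the binary entropy satisfies -x*log x - (1-x)*log(1-x) ≤ 2*log 2 * sqrt(x*(1-x)). -/
open Real

private lemma aux_artanh (t : ℝ) (h0 : 0 ≤ t) (h1 : t < 1) :
    2 * t ≤ Real.log (1 + t) - Real.log (1 - t) := by
  set F : ℝ → ℝ := fun s => Real.log (1 + s) - Real.log (1 - s) - 2 * s with hF
  have hder : ∀ s : ℝ, -1 < s → s < 1 →
      HasDerivAt F (1 / (1 + s) + 1 / (1 - s) - 2) s := by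
    intro s hs1 hs2
    have h1s : (1 : ℝ) + s ≠ 0 := by linarith
    have h2s : (1 : ℝ) - s ≠ 0 := by linarith
    have d1 : HasDerivAt (fun s : ℝ => Real.log (1 + s)) (1 / (1 + s)) s := by
      have := ((hasDerivAt_id s).const_add 1).log h1s
      simpa using this
    have d2 : HasDerivAt (fun s : ℝ => Real.log (1 - s)) (-1 / (1 - s)) s := by
      have := ((hasDerivAt_id s).const_sub 1).log h2s
      simpa using this
    have d3 : HasDerivAt (fun s : ℝ => 2 * s) 2 s := by
      simpa using (hasDerivAt_id s).const_mul 2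
    have := (d1.sub d2).sub d3
    refine this.congr_deriv ?_
    ring
  have hmono : MonotoneOn F (Set.Icc 0 t) := by
    apply monotoneOn_of_deriv_nonneg (convex_Icc 0 t)
    · intro s hs
      exact (hder s (by linarith [hs.1]) (by linarith [hs.2])).continuousAt.continuousWithinAt
    · intro s hs
      rw [interior_Icc] at hs
      exact (hder s (by linarith [hs.1]) (by linarith [hs.2])).differentiableAt.differentiableWithinAt
    · intro s hs
      rw [interior_Icc] at hs
      have h1s : (0:ℝ) < 1 + s := by linarith [hs.1]
      have h2s : (0:ℝ) < 1 - s := by linarith [hs.2]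
      rw [(hder s (by linarith) (by linarith)).deriv]
      have key : 1 / (1 + s) + 1 / (1 - s) - 2
          = 2 * s ^ 2 / ((1 + s) * (1 - s)) := by
        field_simp
        ring
      rw [key]
      positivity
  have h0F : F 0 = 0 := by simp [hF]
  have := hmono (Set.left_mem_Icc.2 h0) (Set.right_mem_Icc.2 h0) h0
  rw [h0F] at this
  have : 0 ≤ Real.log (1 + t) - Real.log (1 - t) - 2 * t := this
  linarith

private lemma aux_quad (t : ℝ) (h0 : 0 ≤ t) (h1 : t < 1) :
    t ^ 2 ≤ (1 + t) * Real.log (1 + t) + (1 - t) * Real.log (1 - t) := by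
  set G : ℝ → ℝ := fun s =>
    (1 + s) * Real.log (1 + s) + (1 - s) * Real.log (1 - s) - s ^ 2 with hG
  have hder : ∀ s : ℝ, -1 < s → s < 1 →
      HasDerivAt G (Real.log (1 + s) - Real.log (1 - s) - 2 * s) s := by
    intro s hs1 hs2
    have h1s : (1 : ℝ) + s ≠ 0 := by linarith
    have h2s : (1 : ℝ) - s ≠ 0 := by linarith
    have dl1 : HasDerivAt (fun s : ℝ => Real.log (1 + s)) (1 / (1 + s)) s := by
      simpa using ((hasDerivAt_id s).const_add 1).log h1s
    have dl2 : HasDerivAt (fun s : ℝ => Real.log (1 - s)) (-1 / (1 - s)) s := by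
      simpa using ((hasDerivAt_id s).const_sub 1).log h2s
    have da : HasDerivAt (fun s : ℝ => 1 + s) 1 s := by
      simpa using (hasDerivAt_id s).const_add 1
    have db : HasDerivAt (fun s : ℝ => 1 - s) (-1) s := by
      simpa using (hasDerivAt_id s).const_sub 1
    have d1 : HasDerivAt (fun s : ℝ => (1 + s) * Real.log (1 + s))
        (1 * Real.log (1 + s) + (1 + s) * (1 / (1 + s))) s := da.mul dl1
    have d2 : HasDerivAt (fun s : ℝ => (1 - s) * Real.log (1 - s))
        ((-1) * Real.log (1 - s) + (1 - s) * (-1 / (1 - s))) s := db.mul dl2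
    have d3 : HasDerivAt (fun s : ℝ => s ^ 2) (2 * s) s := by
      simpa using hasDerivAt_pow 2 s
    have := (d1.add d2).sub d3
    refine this.congr_deriv ?_
    have e1 : (1 + s) * (1 / (1 + s)) = 1 := mul_one_div_cancel h1s
    have e2 : (1 - s) * (-1 / (1 - s)) = -1 := by
      rw [mul_div_assoc', mul_neg_one, neg_div, div_self h2s]
    rw [e1, e2]
    ring
  have hmono : MonotoneOn G (Set.Icc 0 t) := by
    apply monotoneOn_of_deriv_nonneg (convex_Icc 0 t)
    · intro s hs
      exact (hder s (by linarith [hs.1]) (by linarith [hs.2])).continuousAt.continuousWithinAt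
    · intro s hs
      rw [interior_Icc] at hs
      exact (hder s (by linarith [hs.1]) (by linarith [hs.2])).differentiableAt.differentiableWithinAt
    · intro s hs
      rw [interior_Icc] at hs
      rw [(hder s (by linarith [hs.1]) (by linarith [hs.2])).deriv]
      have := aux_artanh s (le_of_lt hs.1) (by linarith [hs.2])
      linarith
  have h0G : G 0 = 0 := by simp [hG]
  have := hmono (Set.left_mem_Icc.2 h0) (Set.right_mem_Icc.2 h0) h0
  rw [h0G] at this
  have : 0 ≤ (1 + t) * Real.log (1 + t) + (1 - t) * Real.log (1 - t) - t ^ 2 := this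
  linarith

set_option maxHeartbeats 1000000 in
/-- The key half: the inequality for `0 < x ≤ 1/2`. -/
private lemma aux_key (x : ℝ) (h0 : 0 < x) (hhalf : x ≤ 1/2) :
    -x * Real.log x - (1 - x) * Real.log (1 - x)
      ≤ 2 * Real.log 2 * Real.sqrt (x * (1 - x)) := by
  have hx1 : x < 1 := by linarith
  have h1x : (0:ℝ) < 1 - x := by linarith
  by_cases hc : (1:ℝ)/16 ≤ x
  · -- middle region: use the quadratic refinement
    set t : ℝ := 1 - 2 * x with ht
    have ht0 : 0 ≤ t := by rw [ht]; linarith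
    have ht1 : t < 1 := by rw [ht]; linarith
    have hq := aux_quad t ht0 ht1
    have e1 : (1:ℝ) + t = 2 * (1 - x) := by rw [ht]; ring
    have e2 : (1:ℝ) - t = 2 * x := by rw [ht]; ring
    rw [e1, e2] at hq
    rw [Real.log_mul two_ne_zero (ne_of_gt h1x), Real.log_mul two_ne_zero (ne_of_gt h0)] at hq
    -- hq : t^2 ≤ 2(1-x)(log 2 + log (1-x)) + 2x(log 2 + log x)
    -- so H(x) ≤ log 2 - (1-2x)^2 / 2
    have hH : -x * Real.log x - (1 - x) * Real.log (1 - x)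
        ≤ Real.log 2 - (1 - 2*x)^2 / 2 := by nlinarith [hq]
    set S : ℝ := Real.sqrt (x * (1 - x)) with hS
    have hSnn : 0 ≤ S := Real.sqrt_nonneg _
    have hS2 : S ^ 2 = x * (1 - x) := Real.sq_sqrt (by nlinarith)
    have hxlb : (15:ℝ)/256 ≤ x * (1 - x) := by nlinarith [mul_nonneg (sub_nonneg.2 hc) (show (0:ℝ) ≤ 15/16 - x by linarith)]
    have hSlb : (0.242 : ℝ) ≤ S := by nlinarith [hS2, hSnn, hxlb]
    have hSub : S ≤ 1/2 := by nlinarith [hS2, hSnn, sq_nonneg (x - 1/2)]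
    have hlog2 : Real.log 2 < 0.6931471808 := Real.log_two_lt_d9
    have hfac : (0:ℝ) ≤ (1 - 2*S) * ((1 + 2*S)/2 - Real.log 2) := by
      apply mul_nonneg <;> nlinarith
    have hsq : (1 - 2*x)^2 = 1 - 4 * S^2 := by rw [hS2]; ring
    calc -x * Real.log x - (1 - x) * Real.log (1 - x)
        ≤ Real.log 2 - (1 - 2*x)^2 / 2 := hH
      _ ≤ 2 * Real.log 2 * S := by rw [hsq]; nlinarith [hfac]
  · -- small region: x < 1/16
    push_neg at hc
    set r : ℝ := Real.sqrt (Real.sqrt x) with hr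
    have hsx : 0 ≤ Real.sqrt x := Real.sqrt_nonneg x
    have hr2 : r ^ 2 = Real.sqrt x := Real.sq_sqrt hsx
    have hr4 : r ^ 4 = x := by
      have : (r ^ 2) ^ 2 = x := by rw [hr2]; exact Real.sq_sqrt h0.le
      nlinarith [this]
    have hrpos : 0 < r := by
      rw [hr]
      exact Real.sqrt_pos.2 (Real.sqrt_pos.2 h0)
    have hrle : r ≤ 1/2 := by
      by_contra h
      push_neg at h
      have h2 : (1/4:ℝ) < r^2 := by nlinarith
      have h4 : (1/16:ℝ) < r^4 := by nlinarith
      rw [hr4] at h4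
      linarith
    -- bound -x log x
    have hlogr : Real.log x = 4 * Real.log r := by
      rw [← hr4, Real.log_pow]; norm_num
    have hb1 : -Real.log r ≤ 1/r - 1 := by
      have := Real.log_le_sub_one_of_pos (show (0:ℝ) < r⁻¹ by positivity)
      rw [Real.log_inv] at this
      rw [inv_eq_one_div] at this
      linarith
    have hb1' : -x * Real.log x ≤ 4 * r^3 - 4 * r^4 := by
      rw [hlogr, ← hr4]
      have h4 : (0:ℝ) < r ^ 4 := by positivity
      have := mul_le_mul_of_nonneg_left hb1 (le_of_lt (show (0:ℝ) < 4 * r^4 by positivity))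
      calc -(r^4) * (4 * Real.log r) = (4 * r^4) * (-Real.log r) := by ring
        _ ≤ (4 * r^4) * (1/r - 1) := this
        _ = 4 * r^3 - 4 * r^4 := by field_simp
    -- bound -(1-x) log (1-x)
    have hb2 : -(1 - x) * Real.log (1 - x) ≤ x := by
      have := Real.log_le_sub_one_of_pos (show (0:ℝ) < (1 - x)⁻¹ by positivity)
      rw [Real.log_inv] at this
      have h' : -Real.log (1 - x) ≤ (1-x)⁻¹ - 1 := this
      have := mul_le_mul_of_nonneg_left h' h1x.le
      calc -(1 - x) * Real.log (1 - x) = (1 - x) * (-Real.log (1 - x)) := by ring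
        _ ≤ (1 - x) * ((1 - x)⁻¹ - 1) := this
        _ = x := by field_simp; ring
    -- RHS decomposition
    set w : ℝ := Real.sqrt (1 - x) with hw
    have hwnn : 0 ≤ w := Real.sqrt_nonneg _
    have hw2 : w ^ 2 = 1 - x := Real.sq_sqrt h1x.le
    have hwlb : (0.968 : ℝ) ≤ w := by
      by_contra h
      push_neg at h
      have hsq : w^2 < 0.937024 := by nlinarith [hwnn]
      rw [hw2] at hsq
      linarith
    have hsplit : Real.sqrt (x * (1 - x)) = r^2 * w := by
      rw [Real.sqrt_mul h0.le, ← hr2, hw]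
    have hlog2 : (0.6931471803 : ℝ) < Real.log 2 := Real.log_two_gt_d9
    rw [hsplit]
    have hpoly : 4 * r^3 - 3 * r^4 ≤ (5/4) * r^2 := by
      nlinarith [mul_nonneg (sq_nonneg r) (mul_nonneg (show (0:ℝ) ≤ 1/2 - r by linarith) (show (0:ℝ) ≤ 5/6 - r by linarith))]
    have hrhs : (5/4 : ℝ) * r^2 ≤ 2 * Real.log 2 * (r^2 * w) := by
      have hp := mul_nonneg (le_of_lt (sub_pos.2 hlog2)) (sub_nonneg.2 hwlb)
      have h54 : (5/4 : ℝ) ≤ 2 * Real.log 2 * w := by nlinarith [hp]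
      have := mul_le_mul_of_nonneg_right h54 (sq_nonneg r)
      linarith [this]
    have hx' : -x * Real.log x - (1 - x) * Real.log (1 - x) ≤ 4 * r^3 - 3*r^4 := by
      have hxr : x = r^4 := hr4.symm
      linarith [hb1', hb2]
    linarith

theorem stmt_0 (x : ℝ) (h0 : 0 < x) (h1 : x < 1) :
    -x * Real.log x - (1 - x) * Real.log (1 - x)
      ≤ 2 * Real.log 2 * Real.sqrt (x * (1 - x)) := by
  by_cases hc : x ≤ 1/2
  · exact aux_key x h0 hc
  · push_neg at hc
    have := aux_key (1 - x) (by linarith) (by linarith)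
    have e1 : (1:ℝ) - (1 - x) = x := by ring
    rw [e1] at this
    rw [show (1 - x) * x = x * (1 - x) by ring] at this
    linarith
end

section
/- For any β > 2 and any 1 ≤ ℓ, the double sum ∑_{j=1}^{ℓ} ∑_{k=ℓ+1}^{∞} 1/(1 + (k-j)^β) is bounded above by (∑_{j=0}^{∞} 1/sqrt(1 + 2 j^β))^2, and this bound is finite, uniformly in ℓ. -/
set_option maxHeartbeats 1000000

theorem stmt_2 (β : ℝ) (hβ : 2 < β) (ℓ : ℕ) (hℓ : 1 ≤ ℓ) :
    (∑ j ∈ Finset.Icc 1 ℓ, ∑' k : ℕ, 1 / (1 + (((ℓ + 1 + k : ℕ) : ℝ) - (j : ℝ)) ^ β))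
        ≤ (∑' j : ℕ, 1 / Real.sqrt (1 + 2 * (j : ℝ) ^ β)) ^ 2
      ∧ Summable (fun j : ℕ => 1 / Real.sqrt (1 + 2 * (j : ℝ) ^ β)) := by
  set a : ℕ → ℝ := fun j => 1 / Real.sqrt (1 + 2 * (j : ℝ) ^ β) with ha_def
  have hβ1 : (1:ℝ) ≤ β := by linarith
  have hanneg : ∀ j, 0 ≤ a j := fun j => by simp only [ha_def]; positivity
  -- Summability of a
  have hsum : Summable a := by
    rw [← summable_nat_add_iff 1]
    have hg : Summable (fun n : ℕ => 1 / (((n + 1 : ℕ) : ℝ)) ^ (β / 2)) := by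
      have := (Real.summable_one_div_nat_rpow (p := β / 2)).mpr (by linarith)
      exact (summable_nat_add_iff 1).mpr this
    refine Summable.of_nonneg_of_le (fun n => hanneg _) (fun n => ?_) hg
    have hx : (0:ℝ) ≤ ((n + 1 : ℕ) : ℝ) := by positivity
    have h1 : (((n + 1 : ℕ) : ℝ)) ^ (β / 2) = Real.sqrt ((((n + 1 : ℕ) : ℝ)) ^ β) := by
      rw [Real.sqrt_eq_rpow, ← Real.rpow_mul hx]
      ring_nf
    have h2 : (((n + 1 : ℕ) : ℝ)) ^ β ≤ 1 + 2 * (((n + 1 : ℕ) : ℝ)) ^ β := by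
      have : (0:ℝ) ≤ (((n + 1 : ℕ) : ℝ)) ^ β := Real.rpow_nonneg hx β
      linarith
    have h3 : Real.sqrt ((((n + 1 : ℕ) : ℝ)) ^ β) ≤ Real.sqrt (1 + 2 * (((n + 1 : ℕ) : ℝ)) ^ β) :=
      Real.sqrt_le_sqrt h2
    have h4 : (0:ℝ) < Real.sqrt ((((n + 1 : ℕ) : ℝ)) ^ β) := by
      apply Real.sqrt_pos.mpr
      apply Real.rpow_pos_of_pos
      positivity
    simp only [ha_def]
    rw [h1]
    exact one_div_le_one_div_of_le h4 h3
  refine ⟨?_, hsum⟩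
  set S : ℝ := ∑' j : ℕ, a j with hS_def
  have hS0 : 0 ≤ S := tsum_nonneg hanneg
  -- superadditivity of rpow
  have hsuper : ∀ x y : ℝ, 0 ≤ x → 0 ≤ y → x ^ β + y ^ β ≤ (x + y) ^ β := by
    intro x y hx hy
    have hb : β ≠ 0 := by linarith
    rcases eq_or_lt_of_le hx with hx0 | hx0
    · simp [← hx0, Real.zero_rpow hb]
    rcases eq_or_lt_of_le hy with hy0 | hy0
    · simp [← hy0, Real.zero_rpow hb]
    have hxy : (0:ℝ) < x + y := by linarith
    have e1 : x ^ β = x ^ (β - 1) * x := by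
      have h := (Real.rpow_add hx0 (β - 1) 1).symm
      rw [Real.rpow_one, sub_add_cancel] at h
      exact h.symm
    have e2 : y ^ β = y ^ (β - 1) * y := by
      have h := (Real.rpow_add hy0 (β - 1) 1).symm
      rw [Real.rpow_one, sub_add_cancel] at h
      exact h.symm
    have e3 : (x + y) ^ β = (x + y) ^ (β - 1) * (x + y) := by
      have h := (Real.rpow_add hxy (β - 1) 1).symm
      rw [Real.rpow_one, sub_add_cancel] at h
      exact h.symm
    have b1 : x ^ (β - 1) ≤ (x + y) ^ (β - 1) :=
      Real.rpow_le_rpow hx (by linarith) (by linarith)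
    have b2 : y ^ (β - 1) ≤ (x + y) ^ (β - 1) :=
      Real.rpow_le_rpow hy (by linarith) (by linarith)
    have c1 := mul_le_mul_of_nonneg_right b1 hx
    have c2 := mul_le_mul_of_nonneg_right b2 hy
    have expand : (x + y) ^ (β - 1) * (x + y)
        = (x + y) ^ (β - 1) * x + (x + y) ^ (β - 1) * y := by ring
    rw [e1, e2, e3]
    linarith [c1, c2]
  -- key pointwise bound
  have key : ∀ m n : ℕ, 1 / (1 + ((m : ℝ) + (n : ℝ)) ^ β) ≤ a m * a n := by
    intro m n
    have hm : (0:ℝ) ≤ (m:ℝ) := Nat.cast_nonneg m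
    have hn : (0:ℝ) ≤ (n:ℝ) := Nat.cast_nonneg n
    have hmb : (0:ℝ) ≤ (m:ℝ) ^ β := Real.rpow_nonneg hm β
    have hnb : (0:ℝ) ≤ (n:ℝ) ^ β := Real.rpow_nonneg hn β
    have hsup := hsuper (m:ℝ) (n:ℝ) hm hn
    have hP : (0:ℝ) < 1 + 2 * (m:ℝ) ^ β := by linarith
    have hQ : (0:ℝ) < 1 + 2 * (n:ℝ) ^ β := by linarith
    have hkey : Real.sqrt (1 + 2 * (m:ℝ) ^ β) * Real.sqrt (1 + 2 * (n:ℝ) ^ β)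
        ≤ 1 + ((m : ℝ) + (n : ℝ)) ^ β := by
      rw [← Real.sqrt_mul hP.le]
      have h2 : (1 + 2 * (m:ℝ) ^ β) * (1 + 2 * (n:ℝ) ^ β)
          ≤ (1 + (m:ℝ) ^ β + (n:ℝ) ^ β) ^ 2 := by
        nlinarith [sq_nonneg ((m:ℝ) ^ β - (n:ℝ) ^ β)]
      calc Real.sqrt ((1 + 2 * (m:ℝ) ^ β) * (1 + 2 * (n:ℝ) ^ β))
          ≤ Real.sqrt ((1 + (m:ℝ) ^ β + (n:ℝ) ^ β) ^ 2) := Real.sqrt_le_sqrt h2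
        _ = 1 + (m:ℝ) ^ β + (n:ℝ) ^ β := Real.sqrt_sq (by linarith)
        _ ≤ 1 + ((m : ℝ) + (n : ℝ)) ^ β := by linarith
    have hprod : a m * a n
        = 1 / (Real.sqrt (1 + 2 * (m:ℝ) ^ β) * Real.sqrt (1 + 2 * (n:ℝ) ^ β)) := by
      simp only [ha_def]
      rw [div_mul_div_comm, one_mul]
    rw [hprod]
    have hpos' : (0:ℝ) < Real.sqrt (1 + 2 * (m:ℝ) ^ β) * Real.sqrt (1 + 2 * (n:ℝ) ^ β) :=
      mul_pos (Real.sqrt_pos.mpr hP) (Real.sqrt_pos.mpr hQ)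
    exact one_div_le_one_div_of_le hpos' hkey
  -- shifted sum bound
  have hshift : Summable (fun k : ℕ => a (k + 1)) := (summable_nat_add_iff 1).mpr hsum
  have htail : (∑' k : ℕ, a (k + 1)) ≤ S := by
    have := Summable.sum_add_tsum_nat_add 1 hsum
    have h0 : ∑ i ∈ Finset.range 1, a i = a 0 := by simp
    rw [h0] at this
    have := this
    nlinarith [hanneg 0]
  -- per-j bound on the inner tsum
  have hinner : ∀ j ∈ Finset.Icc 1 ℓ,
      (∑' k : ℕ, 1 / (1 + (((ℓ + 1 + k : ℕ) : ℝ) - (j : ℝ)) ^ β)) ≤ a (ℓ - j) * S := by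
    intro j hj
    rw [Finset.mem_Icc] at hj
    obtain ⟨hj1, hjℓ⟩ := hj
    have hcast : ∀ k : ℕ, ((ℓ + 1 + k : ℕ) : ℝ) - (j : ℝ)
        = ((ℓ - j : ℕ) : ℝ) + ((k + 1 : ℕ) : ℝ) := by
      intro k
      rw [Nat.cast_sub hjℓ]
      push_cast
      ring
    have hle : ∀ k : ℕ, 1 / (1 + (((ℓ + 1 + k : ℕ) : ℝ) - (j : ℝ)) ^ β)
        ≤ a (ℓ - j) * a (k + 1) := by
      intro k
      rw [hcast k]
      exact key (ℓ - j) (k + 1)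
    have hgsum : Summable (fun k : ℕ => a (ℓ - j) * a (k + 1)) := hshift.mul_left _
    have hfnonneg : ∀ k : ℕ, 0 ≤ 1 / (1 + (((ℓ + 1 + k : ℕ) : ℝ) - (j : ℝ)) ^ β) := by
      intro k
      rw [hcast k]
      have h1 : (0:ℝ) ≤ (((ℓ - j : ℕ) : ℝ) + ((k + 1 : ℕ) : ℝ)) ^ β :=
        Real.rpow_nonneg (by positivity) β
      positivity
    have hfsum : Summable (fun k : ℕ => 1 / (1 + (((ℓ + 1 + k : ℕ) : ℝ) - (j : ℝ)) ^ β)) :=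
      Summable.of_nonneg_of_le hfnonneg hle hgsum
    calc (∑' k : ℕ, 1 / (1 + (((ℓ + 1 + k : ℕ) : ℝ) - (j : ℝ)) ^ β))
        ≤ ∑' k : ℕ, a (ℓ - j) * a (k + 1) := Summable.tsum_le_tsum hle hfsum hgsum
      _ = a (ℓ - j) * ∑' k : ℕ, a (k + 1) := tsum_mul_left
      _ ≤ a (ℓ - j) * S := mul_le_mul_of_nonneg_left htail (hanneg _)
  -- reindexed finite sum bound
  have hfin : (∑ j ∈ Finset.Icc 1 ℓ, a (ℓ - j)) ≤ S := by
    have hinj : ∀ x ∈ Finset.Icc 1 ℓ, ∀ y ∈ Finset.Icc 1 ℓ, ℓ - x = ℓ - y → x = y := by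
      intro x hx y hy h
      rw [Finset.mem_Icc] at hx hy
      omega
    rw [← Finset.sum_image hinj]
    exact Summable.sum_le_tsum _ (fun m _ => hanneg m) hsum
  calc (∑ j ∈ Finset.Icc 1 ℓ, ∑' k : ℕ, 1 / (1 + (((ℓ + 1 + k : ℕ) : ℝ) - (j : ℝ)) ^ β))
      ≤ ∑ j ∈ Finset.Icc 1 ℓ, a (ℓ - j) * S := Finset.sum_le_sum hinner
    _ = (∑ j ∈ Finset.Icc 1 ℓ, a (ℓ - j)) * S := by rw [Finset.sum_mul]
    _ ≤ S * S := mul_le_mul_of_nonneg_right hfin hS0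
    _ = S ^ 2 := (sq S).symm
end

section
/- For any β > 2 and natural numbers j ≥ 1, k ≥ ℓ+1 with j ≤ ℓ, one has 1/(1 + (k-j)^β) ≤ (1/sqrt(1 + 2(ℓ-j)^β)) * (1/sqrt(1 + 2(k-ℓ)^β)). -/
lemma key_ineq (a b β : ℝ) (ha : 0 ≤ a) (hb : 0 ≤ b) (hβ : 1 ≤ β) :
    (1 + 2 * a ^ β) * (1 + 2 * b ^ β) ≤ (1 + (a + b) ^ β) ^ 2 := by
  have h1 : a ^ β + b ^ β ≤ (a + b) ^ β := by
    have h := NNReal.add_rpow_le_rpow_add a.toNNReal b.toNNReal hβ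
    have h' := NNReal.coe_le_coe.2 h
    push_cast [Real.coe_toNNReal a ha, Real.coe_toNNReal b hb] at h'
    linarith
  have hab : a ^ β * b ^ β = (a * b) ^ β := (Real.mul_rpow ha hb).symm
  have h4 : (4 : ℝ) ≤ (4 : ℝ) ^ β := by
    have := Real.rpow_le_rpow_of_exponent_le (x := 4) (by norm_num) hβ
    simpa using this
  have habn : (0 : ℝ) ≤ a * b := mul_nonneg ha hb
  have h5 : (4 : ℝ) * (a * b) ^ β ≤ (4 * (a * b)) ^ β := by
    rw [Real.mul_rpow (by norm_num) habn]
    exact mul_le_mul_of_nonneg_right h4 (Real.rpow_nonneg habn β)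
  have h6 : (4 * (a * b)) ^ β ≤ ((a + b) * (a + b)) ^ β :=
    Real.rpow_le_rpow (by nlinarith) (by nlinarith [sq_nonneg (a - b)])
      (by linarith)
  have h7 : ((a + b) * (a + b)) ^ β = (a + b) ^ β * (a + b) ^ β :=
    Real.mul_rpow (by linarith) (by linarith)
  nlinarith [Real.rpow_nonneg ha β, Real.rpow_nonneg hb β]

theorem stmt_3 (β : ℝ) (hβ : 2 < β) (j k ℓ : ℕ) (hj : 1 ≤ j) (hjl : j ≤ ℓ)
    (hk : ℓ + 1 ≤ k) :
    1 / (1 + ((k : ℝ) - (j : ℝ)) ^ β)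
      ≤ (1 / Real.sqrt (1 + 2 * ((ℓ : ℝ) - (j : ℝ)) ^ β))
        * (1 / Real.sqrt (1 + 2 * ((k : ℝ) - (ℓ : ℝ)) ^ β)) := by
  set a : ℝ := (ℓ : ℝ) - j with haa
  set b : ℝ := (k : ℝ) - ℓ with hbb
  have ha : 0 ≤ a := sub_nonneg.2 (by exact_mod_cast hjl)
  have hb : 0 ≤ b := sub_nonneg.2 (by exact_mod_cast (le_trans (Nat.le_succ ℓ) hk))
  have hX : (k : ℝ) - j = a + b := by ring
  have hA : (0 : ℝ) < 1 + 2 * a ^ β := by positivity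
  have hB : (0 : ℝ) < 1 + 2 * b ^ β := by positivity
  have hkey : (1 + 2 * a ^ β) * (1 + 2 * b ^ β) ≤ (1 + (a + b) ^ β) ^ 2 :=
    key_ineq a b β ha hb (by linarith)
  have hXpos : (0 : ℝ) < 1 + (a + b) ^ β := by positivity
  have hsqrt : Real.sqrt ((1 + 2 * a ^ β) * (1 + 2 * b ^ β)) ≤ 1 + (a + b) ^ β := by
    calc Real.sqrt ((1 + 2 * a ^ β) * (1 + 2 * b ^ β))
        ≤ Real.sqrt ((1 + (a + b) ^ β) ^ 2) := Real.sqrt_le_sqrt hkey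
      _ = 1 + (a + b) ^ β := Real.sqrt_sq hXpos.le
  rw [hX, one_div_mul_one_div, ← Real.sqrt_mul hA.le]
  apply one_div_le_one_div_of_le
  · exact Real.sqrt_pos.2 (mul_pos hA hB)
  · exact hsqrt
end

section
/- Let Γ₁ be a self-adjoint ℓ×ℓ matrix with 0 ≤ Γ₁ ≤ I (all eigenvalues in [0,1]). Then -tr(Γ₁ log Γ₁ + (I-Γ₁) log(I-Γ₁)) ≤ 2 log 2 · tr (Γ₁(I - Γ₁))^{1/2}, where the entropy function x log x is extended by 0 at x = 0. -/
open Real Set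

noncomputable def Dfun (t : ℝ) : ℝ :=
  Real.log 2 * Real.sqrt (1 - t^2)
    + ((1+t) * Real.log (1+t) + (1-t) * Real.log (1-t)) / 2 - Real.log 2

noncomputable def Efun (t : ℝ) : ℝ :=
  (Real.log (1+t) - Real.log (1-t)) / 2 - Real.log 2 * t / Real.sqrt (1 - t^2)

noncomputable def E2fun (t : ℝ) : ℝ :=
  1 / (1 - t^2) - Real.log 2 / ((1 - t^2) * Real.sqrt (1 - t^2))

lemma hasDerivAt_Dfun {t : ℝ} (h : t ∈ Ioo (-1:ℝ) 1) : HasDerivAt Dfun (Efun t) t := by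
  obtain ⟨h1, h2⟩ := h
  have hp : 0 < 1 + t := by linarith
  have hm : 0 < 1 - t := by linarith
  have hq : 0 < 1 - t^2 := by nlinarith
  have hs : 0 < Real.sqrt (1 - t^2) := Real.sqrt_pos.2 hq
  have hsq : Real.sqrt (1 - t^2) ^ 2 = 1 - t^2 := Real.sq_sqrt hq.le
  have dq : HasDerivAt (fun t : ℝ => 1 - t^2) (-(2*t)) t := by
    simpa using ((hasDerivAt_pow 2 t).const_sub 1)
  have dsqrt : HasDerivAt (fun t : ℝ => Real.sqrt (1 - t^2))
      (1 / (2 * Real.sqrt (1 - t^2)) * (-(2*t))) t :=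
    (Real.hasDerivAt_sqrt hq.ne').comp t dq
  have d1 : HasDerivAt (fun t : ℝ => (1+t) * Real.log (1+t))
      ((Real.log (1+t) + 1) * 1) t :=
    (Real.hasDerivAt_mul_log hp.ne').comp t ((hasDerivAt_id t).const_add 1)
  have d2 : HasDerivAt (fun t : ℝ => (1-t) * Real.log (1-t))
      ((Real.log (1-t) + 1) * (-1)) t :=
    (Real.hasDerivAt_mul_log hm.ne').comp t ((hasDerivAt_id t).const_sub 1)
  have := (((dsqrt.const_mul (Real.log 2)).add ((d1.add d2).div_const 2)).sub_const (Real.log 2))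
  refine this.congr_deriv ?_
  unfold Efun
  field_simp
  ring

lemma hasDerivAt_Efun {t : ℝ} (h : t ∈ Ioo (-1:ℝ) 1) : HasDerivAt Efun (E2fun t) t := by
  obtain ⟨h1, h2⟩ := h
  have hp : 0 < 1 + t := by linarith
  have hm : 0 < 1 - t := by linarith
  have hq : 0 < 1 - t^2 := by nlinarith
  have hs : 0 < Real.sqrt (1 - t^2) := Real.sqrt_pos.2 hq
  have hsq : Real.sqrt (1 - t^2) ^ 2 = 1 - t^2 := Real.sq_sqrt hq.le
  have dq : HasDerivAt (fun t : ℝ => 1 - t^2) (-(2*t)) t := by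
    simpa using ((hasDerivAt_pow 2 t).const_sub 1)
  have dsqrt : HasDerivAt (fun t : ℝ => Real.sqrt (1 - t^2))
      (1 / (2 * Real.sqrt (1 - t^2)) * (-(2*t))) t :=
    (Real.hasDerivAt_sqrt hq.ne').comp t dq
  have dl1 : HasDerivAt (fun t : ℝ => Real.log (1+t)) ((1+t)⁻¹ * 1) t :=
    (Real.hasDerivAt_log hp.ne').comp t ((hasDerivAt_id t).const_add 1)
  have dl2 : HasDerivAt (fun t : ℝ => Real.log (1-t)) ((1-t)⁻¹ * (-1)) t :=
    (Real.hasDerivAt_log hm.ne').comp t ((hasDerivAt_id t).const_sub 1)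
  have ddiv : HasDerivAt (fun t : ℝ => t / Real.sqrt (1 - t^2))
      ((1 * Real.sqrt (1 - t^2) - t * (1 / (2 * Real.sqrt (1 - t^2)) * (-(2*t)))) /
        (Real.sqrt (1 - t^2))^2) t :=
    (hasDerivAt_id t).div dsqrt hs.ne'
  have := ((dl1.sub dl2).div_const 2).sub (ddiv.const_mul (Real.log 2))
  convert this using 1
  case e'_8 =>
    ext x
    unfold Efun
    simp only [Pi.sub_apply]
    ring
  case e'_9 =>
    unfold E2fun
    set s := Real.sqrt (1 - t^2) with hsdef
    have hsne : s ≠ 0 := hs.ne'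
    have e1 : (1:ℝ) * s - t * (1 / (2 * s) * -(2 * t)) = 1/s := by
      rw [eq_div_iff hsne]
      have : t * (1 / (2 * s) * -(2 * t)) = -(t^2)/s := by
        field_simp
      rw [this]
      field_simp
      linear_combination hsq
    rw [e1, ← hsq]
    field_simp
    linear_combination (-2*s) * hsq
  all_goals rfl

lemma Dfun_cont : Continuous Dfun := by
  have h1 : Continuous fun t : ℝ => (1+t) * Real.log (1+t) :=
    Real.continuous_mul_log.comp (continuous_const.add continuous_id)
  have h2 : Continuous fun t : ℝ => (1-t) * Real.log (1-t) :=
    Real.continuous_mul_log.comp (continuous_const.sub continuous_id)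
  have h3 : Continuous fun t : ℝ => Real.sqrt (1 - t^2) :=
    Real.continuous_sqrt.comp (by continuity)
  exact (((continuous_const.mul h3)).add ((h1.add h2).div_const 2)).sub continuous_const

lemma Dfun_zero : Dfun 0 = 0 := by norm_num [Dfun]

lemma Dfun_one : Dfun 1 = 0 := by norm_num [Dfun]

lemma Efun_zero : Efun 0 = 0 := by norm_num [Efun]

lemma Dfun_nonneg01 : ∀ t ∈ Icc (0:ℝ) 1, 0 ≤ Dfun t := by
  have hc0 : 0 < Real.log 2 := Real.log_pos (by norm_num)
  have hc1 : Real.log 2 < 1 := by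
    have := Real.log_two_lt_d9; linarith
  set c := Real.log 2 with hcdef
  have hcsq : 0 < 1 - c^2 := by nlinarith
  set t₁ := Real.sqrt (1 - c^2) with ht1def
  have ht1sq : t₁^2 = 1 - c^2 := Real.sq_sqrt hcsq.le
  have ht1pos : 0 < t₁ := Real.sqrt_pos.2 hcsq
  have ht1lt : t₁ < 1 := by nlinarith [Real.sqrt_nonneg (1 - c^2)]
  -- E₂ ≥ 0 on (0,t₁)
  have hsub : ∀ x ∈ Icc (0:ℝ) t₁, x ∈ Ioo (-1:ℝ) 1 :=
    fun x hx => ⟨by linarith [hx.1], by linarith [hx.2]⟩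
  have hsub' : ∀ x ∈ Icc t₁ (1:ℝ), -1 < x ∧ x ≤ 1 :=
    fun x hx => ⟨by linarith [hx.1], hx.2⟩
  have hmonoE : MonotoneOn Efun (Icc 0 t₁) := by
    apply monotoneOn_of_hasDerivWithinAt_nonneg (f' := E2fun) (convex_Icc _ _)
    · exact fun x hx => (hasDerivAt_Efun (hsub x hx)).continuousAt.continuousWithinAt
    · intro x hx
      rw [interior_Icc] at hx
      exact (hasDerivAt_Efun (hsub x (Ioo_subset_Icc_self hx))).hasDerivWithinAt
    · intro x hx
      rw [interior_Icc] at hx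
      have hq : 0 < 1 - x^2 := by nlinarith [hx.1, hx.2]
      have hs : 0 < Real.sqrt (1 - x^2) := Real.sqrt_pos.2 hq
      have hcs : c ≤ Real.sqrt (1 - x^2) := by
        rw [show c = Real.sqrt (c^2) by rw [Real.sqrt_sq hc0.le]]
        apply Real.sqrt_le_sqrt
        nlinarith [hx.1, hx.2]
      unfold E2fun
      rw [sub_nonneg, div_le_div_iff₀ (by positivity) hq]
      nlinarith
  have hEnonneg : ∀ x ∈ Icc (0:ℝ) t₁, 0 ≤ Efun x := by
    intro x hx
    have := hmonoE ⟨le_refl 0, ht1pos.le⟩ hx hx.1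
    rwa [Efun_zero] at this
  have hmonoD : MonotoneOn Dfun (Icc 0 t₁) := by
    apply monotoneOn_of_hasDerivWithinAt_nonneg (f' := Efun) (convex_Icc _ _)
    · exact Dfun_cont.continuousOn
    · intro x hx
      rw [interior_Icc] at hx
      exact (hasDerivAt_Dfun (hsub x (Ioo_subset_Icc_self hx))).hasDerivWithinAt
    · intro x hx
      rw [interior_Icc] at hx
      exact hEnonneg x (Ioo_subset_Icc_self hx)
  have hDA : ∀ x ∈ Icc (0:ℝ) t₁, 0 ≤ Dfun x := by
    intro x hx
    have := hmonoD ⟨le_refl 0, ht1pos.le⟩ hx hx.1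
    rwa [Dfun_zero] at this
  have hconc : ConcaveOn ℝ (Icc t₁ 1) Dfun := by
    apply concaveOn_of_hasDerivWithinAt2_nonpos (f' := Efun) (f'' := E2fun) (convex_Icc _ _)
      Dfun_cont.continuousOn
    · intro x hx
      rw [interior_Icc] at hx ⊢
      exact (hasDerivAt_Dfun ⟨by linarith [hx.1], hx.2⟩).hasDerivWithinAt
    · intro x hx
      rw [interior_Icc] at hx ⊢
      exact (hasDerivAt_Efun ⟨by linarith [hx.1], hx.2⟩).hasDerivWithinAt
    · intro x hx
      rw [interior_Icc] at hx
      have hq : 0 < 1 - x^2 := by nlinarith [hx.1, hx.2]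
      have hs : 0 < Real.sqrt (1 - x^2) := Real.sqrt_pos.2 hq
      have hcs : Real.sqrt (1 - x^2) ≤ c := by
        rw [show c = Real.sqrt (c^2) by rw [Real.sqrt_sq hc0.le]]
        apply Real.sqrt_le_sqrt
        nlinarith [hx.1, hx.2]
      unfold E2fun
      rw [sub_nonpos, div_le_div_iff₀ hq (by positivity)]
      nlinarith
  intro t ht
  rcases le_total t t₁ with h | h
  · exact hDA t ⟨ht.1, h⟩
  · have hseg : t ∈ segment ℝ t₁ 1 := by
      rw [segment_eq_Icc ht1lt.le]; exact ⟨h, ht.2⟩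
    obtain ⟨a, b, ha, hb, hab, habt⟩ := hseg
    have hcc := hconc.2 (left_mem_Icc.2 ht1lt.le) (right_mem_Icc.2 ht1lt.le) ha hb hab
    rw [habt, Dfun_one] at hcc
    have hDt₁ : 0 ≤ Dfun t₁ := hDA t₁ ⟨ht1pos.le, le_refl _⟩
    simp only [smul_eq_mul] at hcc
    nlinarith [mul_nonneg ha hDt₁]

lemma Dfun_even (t : ℝ) : Dfun (-t) = Dfun t := by
  simp only [Dfun, neg_sq]
  ring_nf

lemma Dfun_nonneg : ∀ t ∈ Icc (-1:ℝ) 1, 0 ≤ Dfun t := by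
  intro t ht
  rcases le_total 0 t with h | h
  · exact Dfun_nonneg01 t ⟨h, ht.2⟩
  · rw [← Dfun_even t]
    exact Dfun_nonneg01 (-t) ⟨by linarith, by linarith [ht.1]⟩

lemma key_scalar (x : ℝ) (h0 : 0 ≤ x) (h1 : x ≤ 1) :
    -(x * Real.log x + (1-x) * Real.log (1-x)) ≤ 2 * Real.log 2 * Real.sqrt (x*(1-x)) := by
  rcases eq_or_lt_of_le h0 with h | hx0
  · simp [← h]
  rcases eq_or_lt_of_le h1 with h | hx1
  · simp [h]
  have hmx : 0 < 1 - x := by linarith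
  have hDval : Dfun (2*x-1) = 2*Real.log 2*Real.sqrt (x*(1-x))
      + (x*Real.log x + (1-x)*Real.log (1-x)) := by
    unfold Dfun
    rw [show 1 - (2*x-1)^2 = 2^2*(x*(1-x)) by ring,
      Real.sqrt_mul (by norm_num) (x*(1-x)), Real.sqrt_sq (by norm_num : (0:ℝ) ≤ 2),
      show (1:ℝ)+(2*x-1) = 2*x by ring, show (1:ℝ)-(2*x-1) = 2*(1-x) by ring,
      Real.log_mul (by norm_num) hx0.ne', Real.log_mul (by norm_num) hmx.ne']
    ring
  have := Dfun_nonneg (2*x-1) ⟨by linarith, by linarith⟩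
  linarith

theorem stmt_5 {ℓ : ℕ} (Γ : Matrix (Fin ℓ) (Fin ℓ) ℂ) (hΓ : Γ.IsHermitian)
    (h0 : ∀ i, 0 ≤ hΓ.eigenvalues i) (h1 : ∀ i, hΓ.eigenvalues i ≤ 1) :
    -(∑ i, (hΓ.eigenvalues i * Real.log (hΓ.eigenvalues i)
        + (1 - hΓ.eigenvalues i) * Real.log (1 - hΓ.eigenvalues i)))
      ≤ 2 * Real.log 2 * ∑ i, Real.sqrt (hΓ.eigenvalues i * (1 - hΓ.eigenvalues i)) := by
  rw [Finset.mul_sum, ← Finset.sum_neg_distrib]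
  exact Finset.sum_le_sum fun i _ => key_scalar _ (h0 i) (h1 i)
end

section
/- (Peierls–Bogoliubov inequality) For any convex function f : ℝ → ℝ and any m×m Hermitian matrix A, tr f(A) ≥ ∑_{j=1}^m f(A_{jj}). -/
theorem stmt_6 {m : ℕ} (f : ℝ → ℝ) (hf : ConvexOn ℝ Set.univ f)
    (A : Matrix (Fin m) (Fin m) ℂ) (hA : A.IsHermitian) :
    ∑ j, f ((A j j).re) ≤ ∑ i, f (hA.eigenvalues i) := by
  set U : Matrix (Fin m) (Fin m) ℂ := (hA.eigenvectorUnitary : Matrix (Fin m) (Fin m) ℂ) with hU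
  set w : Fin m → Fin m → ℝ := fun j i => Complex.normSq (U j i) with hw
  have hrow : ∀ j, ∑ i, w j i = 1 := by
    intro j
    have h1 : (U * star U) j j = 1 := by
      rw [(Matrix.mem_unitaryGroup_iff).mp hA.eigenvectorUnitary.2]
      simp
    have : ∑ i, U j i * (starRingEnd ℂ) (U j i) = 1 := by
      simpa [Matrix.mul_apply, Matrix.star_apply] using h1
    have := congrArg Complex.re this
    simpa [Complex.mul_conj, hw, Complex.re_sum] using this
  have hcol : ∀ i, ∑ j, w j i = 1 := by
    intro i
    have h1 : (star U * U) i i = 1 := by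
      rw [(Matrix.mem_unitaryGroup_iff').mp hA.eigenvectorUnitary.2]
      simp
    have : ∑ j, (starRingEnd ℂ) (U j i) * U j i = 1 := by
      simpa [Matrix.mul_apply, Matrix.star_apply] using h1
    have := congrArg Complex.re this
    simpa [mul_comm, Complex.mul_conj, hw, Complex.re_sum] using this
  have hdiag : ∀ j, (A j j).re = ∑ i, w j i * hA.eigenvalues i := by
    intro j
    have h := hA.spectral_theorem
    have h2 : A j j = ∑ i, U j i * (hA.eigenvalues i : ℂ) * (starRingEnd ℂ) (U j i) := by
      conv_lhs => rw [h]
      simp [Matrix.mul_apply, Matrix.diagonal, Matrix.star_apply, Finset.sum_mul,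
        Function.comp]
      rfl
    have := congrArg Complex.re h2
    rw [this, Complex.re_sum]
    refine Finset.sum_congr rfl fun i _ => ?_
    have : U j i * (hA.eigenvalues i : ℂ) * (starRingEnd ℂ) (U j i)
        = ((hA.eigenvalues i : ℂ)) * (U j i * (starRingEnd ℂ) (U j i)) := by ring
    rw [this, Complex.mul_conj]
    simp [hw, mul_comm]
  calc ∑ j, f ((A j j).re) ≤ ∑ j, ∑ i, w j i * f (hA.eigenvalues i) := by
        refine Finset.sum_le_sum fun j _ => ?_
        rw [hdiag j]
        have := hf.map_sum_le (t := Finset.univ) (w := w j) (p := fun i => hA.eigenvalues i)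
          (fun i _ => Complex.normSq_nonneg _) (hrow j) (fun i _ => Set.mem_univ _)
        simpa [smul_eq_mul] using this
    _ = ∑ i, f (hA.eigenvalues i) := by
        rw [Finset.sum_comm]
        refine Finset.sum_congr rfl fun i _ => ?_
        rw [← Finset.sum_mul, hcol i, one_mul]
end

section
/- Let S = A + B where A is real symmetric and B real antisymmetric (n×n), with singular value decomposition U S V^t = Λ = diag(λ₁,…,λₙ) for real orthogonal U, V. Then with W = (1/2)[[V+U, V−U],[V−U, V+U]], one has [[A,B],[−B,−A]] = W^t [[Λ,0],[0,−Λ]] W. -/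
open Matrix

theorem stmt_15 {n : ℕ} (A B U V : Matrix (Fin n) (Fin n) ℝ) (lam : Fin n → ℝ)
    (hA : Aᵀ = A) (hB : Bᵀ = -B)
    (hU : Uᵀ * U = 1) (hU' : U * Uᵀ = 1) (hV : Vᵀ * V = 1) (hV' : V * Vᵀ = 1)
    (hSVD : U * (A + B) * Vᵀ = Matrix.diagonal lam)
    (W : Matrix (Fin n ⊕ Fin n) (Fin n ⊕ Fin n) ℝ)
    (hW : W = (1 / 2 : ℝ) • Matrix.fromBlocks (V + U) (V - U) (V - U) (V + U)) :
    Matrix.fromBlocks A B (-B) (-A)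
      = Wᵀ * Matrix.fromBlocks (Matrix.diagonal lam) 0 0 (-(Matrix.diagonal lam)) * W := by
  set D := Matrix.diagonal lam with hD
  have h1 : Uᵀ * D * V = A + B := by
    have := congrArg (fun M => Uᵀ * M * V) hSVD
    rw [← this]
    calc Uᵀ * (U * (A + B) * Vᵀ) * V = (Uᵀ * U) * (A + B) * (Vᵀ * V) := by
          noncomm_ring
      _ = A + B := by rw [hU, hV, one_mul, mul_one]
  have h2 : Vᵀ * D * U = A - B := by
    have hDt : Dᵀ = D := Matrix.diagonal_transpose lam
    have := congrArg Matrix.transpose h1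
    rw [Matrix.transpose_mul, Matrix.transpose_mul, hDt, Matrix.transpose_transpose,
      Matrix.transpose_add, hA, hB] at this
    rw [← Matrix.mul_assoc] at this
    rw [this]
    abel
  subst hW
  rw [Matrix.transpose_smul, Matrix.smul_mul, Matrix.mul_smul, Matrix.smul_mul, smul_smul]
  rw [Matrix.fromBlocks_transpose, Matrix.fromBlocks_multiply, Matrix.fromBlocks_multiply]
  rw [Matrix.fromBlocks_smul, Matrix.fromBlocks_inj]
  have e11 : ((V + U)ᵀ * D + (V - U)ᵀ * 0) * (V + U) + ((V + U)ᵀ * 0 + (V - U)ᵀ * (-D)) * (V - U)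
      = Uᵀ * D * V + Uᵀ * D * V + (Vᵀ * D * U + Vᵀ * D * U) := by
    simp only [Matrix.transpose_add, Matrix.transpose_sub]
    noncomm_ring
  have e12 : ((V + U)ᵀ * D + (V - U)ᵀ * 0) * (V - U) + ((V + U)ᵀ * 0 + (V - U)ᵀ * (-D)) * (V + U)
      = Uᵀ * D * V + Uᵀ * D * V - (Vᵀ * D * U + Vᵀ * D * U) := by
    simp only [Matrix.transpose_add, Matrix.transpose_sub]
    noncomm_ring
  have e21 : ((V - U)ᵀ * D + (V + U)ᵀ * 0) * (V + U) + ((V - U)ᵀ * 0 + (V + U)ᵀ * (-D)) * (V - U)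
      = Vᵀ * D * U + Vᵀ * D * U - (Uᵀ * D * V + Uᵀ * D * V) := by
    simp only [Matrix.transpose_add, Matrix.transpose_sub]
    noncomm_ring
  have e22 : ((V - U)ᵀ * D + (V + U)ᵀ * 0) * (V - U) + ((V - U)ᵀ * 0 + (V + U)ᵀ * (-D)) * (V + U)
      = -(Uᵀ * D * V + Uᵀ * D * V) - (Vᵀ * D * U + Vᵀ * D * U) := by
    simp only [Matrix.transpose_add, Matrix.transpose_sub]
    noncomm_ring
  refine ⟨?_, ?_, ?_, ?_⟩
  · rw [e11, h1, h2]; module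
  · rw [e12, h1, h2]; module
  · rw [e21, h1, h2]; module
  · rw [e22, h1, h2]; module
end
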